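/- For every integer n ≥ 0, Σ_{σ ∈ 𝒬̂_{n+1}} x^{exc(σ)}·(−1)^{cyc(σ)} = Σ_{k=0}^{n} x^{n−k} · ( Σ_{i=k}^{n} (−1)^{i−1}·2^{n−i}·C(n,i) ), as an identity of polynomials in x with integer coefficients, where C(n,i) is the binomial coefficient. -/

import Mathlib

open Finset Polynomial

/-- `exc(σ)`: the number of excedances of `σ`. -/
def exc {n : ℕ} (σ : Equiv.Perm (Fin n)) : ℕ :=
  (Finset.univ.filter fun i => i < σ i).card

/-- `fixp(σ)`: the number of fixed points of `σ`. -/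
def fixp {n : ℕ} (σ : Equiv.Perm (Fin n)) : ℕ :=
  (Finset.univ.filter fun i => σ i = i).card

/-- `cyc(σ)`: the number of cycles of `σ`, fixed points counted. -/
def cyc {n : ℕ} (σ : Equiv.Perm (Fin n)) : ℕ :=
  σ.cycleType.card + fixp σ

/-- `𝒬̂_{m+1}`: permutations `σ` of `{1, …, m+1}` such that every element `x` other
than the largest element in the cycle of `σ` containing the largest element
satisfies `σ(x) > x`. -/
noncomputable def Qhat (m : ℕ) : Finset (Equiv.Perm (Fin (m + 1))) :=
  Finset.univ.filter fun σ =>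
    ∀ x, σ.SameCycle x (Fin.last m) → x ≠ Fin.last m → x < σ x

namespace SECS

open Equiv Equiv.Perm

noncomputable section


variable {α : Type*} [Fintype α] [LinearOrder α] [DecidableEq α]

def excG (σ : Perm α) : ℕ := (Finset.univ.filter fun i => i < σ i).card
def fixG (σ : Perm α) : ℕ := (Finset.univ.filter fun i => σ i = i).card
def cycG (σ : Perm α) : ℕ := Multiset.card σ.cycleType + fixG σ

def Mx (α : Type*) [Fintype α] [LinearOrder α] : Matrix α α (Polynomial ℤ) :=
  fun a b => if b < a then X else 1

lemma detMx_fin : ∀ m : ℕ, (Mx (Fin (m+1))).det = (1 - X)^m := by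
  intro m
  induction m with
  | zero =>
    rw [Matrix.det_fin_one]
    simp [Mx]
  | succ m ih =>
    have key := Matrix.det_updateRow_add_smul_self (Mx (Fin (m+2)))
      (i := Fin.last (m+1)) (j := Fin.castSucc (Fin.last m))
      (by simp [Fin.ext_iff]) (-1 : Polynomial ℤ)
    set B := (Mx (Fin (m+2))).updateRow (Fin.last (m+1))
      ((Mx (Fin (m+2))) (Fin.last (m+1)) + (-1 : Polynomial ℤ) • (Mx (Fin (m+2))) (Fin.castSucc (Fin.last m))) with hB
    have hrow : ∀ j, B (Fin.last (m+1)) j = if j = Fin.castSucc (Fin.last m) then X - 1 else 0 := by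
      intro j
      rw [hB, Matrix.updateRow_self]
      simp only [Pi.add_apply, Pi.smul_apply, smul_eq_mul, neg_one_mul, Mx]
      rcases lt_trichotomy (j : ℕ) m with h | h | h
      · have h1 : j < Fin.last (m+1) := by simp [Fin.lt_def]; omega
        have h2 : j < Fin.castSucc (Fin.last m) := by simp [Fin.lt_def]; omega
        have h3 : j ≠ Fin.castSucc (Fin.last m) := by simp [Fin.ext_iff]; omega
        simp [h1, h2, h3]
      · have h3 : j = Fin.castSucc (Fin.last m) := by simp [Fin.ext_iff]; omega
        subst h3
        have h1 : Fin.castSucc (Fin.last m) < Fin.last (m+1) := by simp [Fin.lt_def]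
        rw [if_pos rfl, if_pos h1, if_neg (lt_irrefl _)]
        ring
      · have hj : (j:ℕ) = m + 1 := by omega
        have h1 : ¬ j < Fin.last (m+1) := by simp [Fin.lt_def]; omega
        have h2 : ¬ j < Fin.castSucc (Fin.last m) := by simp [Fin.lt_def]; omega
        have h3 : j ≠ Fin.castSucc (Fin.last m) := by simp [Fin.ext_iff]; omega
        simp [h1, h2, h3]
    have hsub : B.submatrix (Fin.last (m+1)).succAbove (Fin.castSucc (Fin.last m)).succAbove
        = Mx (Fin (m+1)) := by
      ext i j
      rw [Matrix.submatrix_apply]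
      have hrne : (Fin.last (m+1)).succAbove i ≠ Fin.last (m+1) := Fin.succAbove_ne _ _
      rw [hB, Matrix.updateRow_ne hrne]
      have hrval : (((Fin.last (m+1)).succAbove i : Fin (m+2)) : ℕ) = (i : ℕ) := by
        rw [Fin.succAbove_last]; simp
      have hcval : ((((Fin.castSucc (Fin.last m)).succAbove j : Fin (m+2))) : ℕ)
          = if (j:ℕ) < m then (j:ℕ) else (j:ℕ)+1 := by
        rcases lt_or_ge (j:ℕ) m with h | h
        · rw [Fin.succAbove_of_castSucc_lt]
          · simp [h]
          · simp [Fin.lt_def]; omega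
        · rw [Fin.succAbove_of_le_castSucc]
          · simp [h, Nat.not_lt.mpr h]
          · simp [Fin.le_def]; omega
      simp only [Mx, Fin.lt_def, hrval, hcval]
      have : (j:ℕ) < m+1 := j.isLt
      have : (i:ℕ) < m+1 := i.isLt
      split_ifs with h1 h2 h2 <;> first | rfl | omega
    rw [← key, Matrix.det_succ_row B (Fin.last (m+1))]
    rw [Finset.sum_eq_single (Fin.castSucc (Fin.last m))]
    · rw [hrow, if_pos rfl, hsub, ih]
      simp only [Fin.val_last, Fin.coe_castSucc]
      have h2 : ((m+1)+m) = 2*m+1 := by omega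
      rw [h2, pow_succ, pow_mul, neg_one_sq, one_pow, pow_succ]
      ring
    · intro b _ hb
      rw [hrow, if_neg hb, mul_zero, zero_mul]
    · intro h
      exact absurd (Finset.mem_univ _) h

def Aval (d : ℕ) : Polynomial ℤ := if d = 0 then 1 else (-1)^d * (1 - X)^(d-1)

lemma detMx (m : ℕ) (h : Fintype.card α = m + 1) : (Mx α).det = (1 - X)^m := by
  have e : Fin (m+1) ≃o α := monoEquivOfFin α h
  have heq : (Mx (Fin (m+1))) = (Mx α).submatrix e.toEquiv e.toEquiv := by
    ext a b
    simp only [Matrix.submatrix_apply, Mx]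
    have hlt : ∀ x y : Fin (m+1), e.toEquiv x < e.toEquiv y ↔ x < y := fun x y => e.lt_iff_lt
    by_cases hba : b < a
    · rw [if_pos hba, if_pos ((hlt b a).mpr hba)]
    · rw [if_neg hba, if_neg (fun hc => hba ((hlt b a).mp hc))]
  rw [← detMx_fin m, heq, Matrix.det_submatrix_equiv_self]

lemma prod_Mx (σ : Perm α) : (∏ i, Mx α (σ i) i) = X ^ excG σ := by
  unfold Mx excG
  rw [Finset.prod_ite, Finset.prod_const, Finset.prod_const_one, mul_one]

lemma cyc_sign (σ : Perm α) :
    ((-1 : Polynomial ℤ)) ^ (cycG σ) = (-1)^(Fintype.card α) * (((sign σ : ℤ) : Polynomial ℤ)) := by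
  have hsign : (sign σ : ℤ) = (-1 : ℤ) ^ (σ.cycleType.sum + Multiset.card σ.cycleType) := by
    rw [sign_of_cycleType]; push_cast; ring
  rw [hsign]
  have hsum : σ.cycleType.sum = σ.support.card := sum_cycleType σ
  have hcard : σ.support.card + fixG σ = Fintype.card α := by
    have hsplit := Finset.card_filter_add_card_filter_not (s := (Finset.univ : Finset α))
      (p := fun x => σ x = x)
    have hsupp : (Finset.univ.filter fun x => ¬ σ x = x) = σ.support := by
      ext x; simp [Equiv.Perm.mem_support]
    rw [hsupp, Finset.card_univ] at hsplit
    unfold fixG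
    omega
  have hpar : Fintype.card α + (σ.cycleType.sum + Multiset.card σ.cycleType)
      = 2 * σ.support.card + cycG σ := by
    unfold cycG; omega
  have : ((-1 : Polynomial ℤ)) ^ (cycG σ) * ((-1 : Polynomial ℤ))^(2 * σ.support.card)
      = (-1)^(Fintype.card α) * ((-1 : Polynomial ℤ)) ^ (σ.cycleType.sum + Multiset.card σ.cycleType) := by
    rw [← pow_add, ← pow_add, hpar, add_comm (cycG σ)]
  rw [pow_mul, neg_one_sq, one_pow, mul_one] at this
  rw [this]
  congr 1
  push_cast
  ring


lemma sum_sign_excG (m : ℕ) (h : Fintype.card α = m + 1) :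
    ∑ σ : Perm α, ((sign σ : ℤ) : Polynomial ℤ) * X ^ excG σ = (1 - X)^m := by
  rw [← detMx m h, Matrix.det_apply]
  refine Finset.sum_congr rfl fun σ _ => ?_
  rw [prod_Mx, Units.smul_def, zsmul_eq_mul]

lemma sum_excG_cycG (d : ℕ) (h : Fintype.card α = d) :
    ∑ σ : Perm α, (X : Polynomial ℤ)^(excG σ) * (-1)^(cycG σ) = Aval d := by
  rcases d with - | m
  · haveI : IsEmpty α := Fintype.card_eq_zero_iff.mp h
    haveI : Subsingleton (Perm α) := ⟨fun a b => Equiv.ext fun x => isEmptyElim x⟩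
    rw [Finset.sum_eq_single_of_mem 1 (Finset.mem_univ 1)
      (fun b _ hb => absurd (Subsingleton.elim b 1) hb)]
    unfold Aval excG cycG fixG
    simp
  · unfold Aval
    rw [if_neg (Nat.succ_ne_zero m)]
    have step : ∀ σ : Perm α, (X : Polynomial ℤ)^(excG σ) * (-1)^(cycG σ)
        = (-1)^(m+1) * (((sign σ : ℤ) : Polynomial ℤ) * X ^ excG σ) := by
      intro σ
      rw [cyc_sign σ, h]
      ring
    rw [Finset.sum_congr rfl fun σ _ => step σ, ← Finset.mul_sum, sum_sign_excG m h]
    simp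






lemma Xsub_ne : (X - 1 : Polynomial ℤ) ≠ 0 := fun h => by
  have := congrArg (eval 0) h
  simp at this

lemma partD (n : ℕ) :
    ∑ j ∈ Finset.range (n+1), (n.choose j) • (-(X : Polynomial ℤ)^j * Aval (n - j))
      = ∑ k ∈ Finset.range (n + 1), (X : Polynomial ℤ) ^ (n - k) *
          C (∑ i ∈ Finset.Icc k n, (-1 : ℤ) ^ (i + 1) * 2 ^ (n - i) * n.choose i) := by
  apply mul_left_cancel₀ Xsub_ne
  have h1 : (X - 1 : Polynomial ℤ) *
      ∑ j ∈ Finset.range (n+1), (n.choose j) • (-(X : Polynomial ℤ)^j * Aval (n - j))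
      = (X + (X - 1))^n - X^(n+1) := by
    rw [Finset.mul_sum]
    have hterm : ∀ j ∈ Finset.range (n+1),
        (X - 1 : Polynomial ℤ) * ((n.choose j) • (-(X : Polynomial ℤ)^j * Aval (n - j)))
        = X^j * (X-1)^(n-j) * (n.choose j : Polynomial ℤ) - (if j = n then X^(n+1) else 0) := by
      intro j hj
      rw [Finset.mem_range] at hj
      rcases eq_or_lt_of_le (Nat.lt_succ_iff.mp hj) with hjn | hjn
      · subst hjn
        rw [if_pos rfl, Nat.sub_self]
        unfold Aval
        rw [if_pos rfl]
        simp only [Nat.choose_self, one_smul, pow_zero]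
        ring
      · rw [if_neg (Nat.ne_of_lt hjn)]
        obtain ⟨d, hd⟩ : ∃ d, n - j = d + 1 := ⟨n - j - 1, by omega⟩
        rw [hd]
        unfold Aval
        rw [if_neg (Nat.succ_ne_zero d), nsmul_eq_mul, sub_zero]
        have hneg : ((-1 : Polynomial ℤ))^(d+1) = -(-1)^d := by rw [pow_succ]; ring
        have hbase : ((-1 : Polynomial ℤ))^d * (1-X)^d = (X-1)^d := by
          rw [← mul_pow]; congr 1; ring
        simp only [Nat.add_sub_cancel, hneg]
        calc (X - 1 : Polynomial ℤ) * (↑(n.choose j) * (-X ^ j * (-(-1) ^ d * (1 - X) ^ d)))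
            = X^j * ((X-1) * ((-1)^d * (1-X)^d)) * (n.choose j : Polynomial ℤ) := by ring
          _ = X^j * (X-1)^(d+1) * (n.choose j : Polynomial ℤ) := by rw [hbase, ← pow_succ']
    rw [Finset.sum_congr rfl hterm, Finset.sum_sub_distrib, Finset.sum_ite_eq' (Finset.range (n+1)) n]
    rw [if_pos (Finset.self_mem_range_succ n), ← add_pow]
  have h2 : (X - 1 : Polynomial ℤ) *
      ∑ k ∈ Finset.range (n + 1), (X : Polynomial ℤ) ^ (n - k) *
          C (∑ i ∈ Finset.Icc k n, (-1 : ℤ) ^ (i + 1) * 2 ^ (n - i) * n.choose i)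
      = (X + (X - 1))^n - X^(n+1) := by
    rw [Finset.mul_sum]
    have hterm : ∀ k ∈ Finset.range (n+1),
        (X - 1 : Polynomial ℤ) * ((X : Polynomial ℤ) ^ (n - k) *
          C (∑ i ∈ Finset.Icc k n, (-1 : ℤ) ^ (i + 1) * 2 ^ (n - i) * n.choose i))
        = ∑ i ∈ Finset.Icc k n, (X^(n+1-k) - X^(n-k)) *
            C ((-1 : ℤ) ^ (i + 1) * 2 ^ (n - i) * n.choose i) := by
      intro k hk
      rw [Finset.mem_range] at hk
      rw [map_sum, Finset.mul_sum, Finset.mul_sum]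
      refine Finset.sum_congr rfl fun i _ => ?_
      have hx : (X - 1 : Polynomial ℤ) * X^(n-k) = X^(n+1-k) - X^(n-k) := by
        have : n + 1 - k = (n - k) + 1 := by omega
        rw [this, pow_succ]
        ring
      rw [← mul_assoc, hx]
    rw [Finset.sum_congr rfl hterm]
    rw [Finset.sum_comm' (t' := Finset.range (n+1)) (s' := fun i => Finset.range (i+1))
      (by intro k i; simp only [Finset.mem_range, Finset.mem_Icc]; omega)]
    have hinner : ∀ i ∈ Finset.range (n+1),
        ∑ k ∈ Finset.range (i+1), (X^(n+1-k) - X^(n-k)) *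
          C ((-1 : ℤ) ^ (i + 1) * 2 ^ (n - i) * n.choose i)
        = (X^(n+1) - X^(n-i)) * C ((-1 : ℤ) ^ (i + 1) * 2 ^ (n - i) * n.choose i) := by
      intro i hi
      rw [Finset.mem_range] at hi
      rw [← Finset.sum_mul]
      congr 1
      have hcong : ∀ k ∈ Finset.range (i+1),
          (X^(n+1-k) - X^(n-k) : Polynomial ℤ) = X^(n+1-k) - X^(n+1-(k+1)) := by
        intro k hk
        rw [Finset.mem_range] at hk
        congr 2
        omega
      rw [Finset.sum_congr rfl hcong, Finset.sum_range_sub' (fun k => (X : Polynomial ℤ)^(n+1-k))]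
      congr 2
      omega
    rw [Finset.sum_congr rfl hinner]
    have hA : (∑ i ∈ Finset.range (n+1), (-1 : ℤ) ^ (i + 1) * 2 ^ (n - i) * n.choose i) = -1 := by
      have h2 : ∑ i ∈ Finset.range (n+1), (-1:ℤ)^(i+1) * 2^(n-i) * n.choose i
          = -∑ i ∈ Finset.range (n+1), (-1:ℤ)^i * 2^(n-i) * n.choose i := by
        rw [← Finset.sum_neg_distrib]
        refine Finset.sum_congr rfl fun i _ => by rw [pow_succ]; ring
      rw [h2, ← add_pow (-1:ℤ) 2 n]
      norm_num
    have e1 : ∑ i ∈ Finset.range (n+1), ((X^(n+1) - X^(n-i)) : Polynomial ℤ) *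
          C ((-1 : ℤ) ^ (i + 1) * 2 ^ (n - i) * n.choose i)
        = X^(n+1) * C (∑ i ∈ Finset.range (n+1), (-1 : ℤ) ^ (i + 1) * 2 ^ (n - i) * n.choose i)
          - ∑ i ∈ Finset.range (n+1), X^(n-i) * C ((-1 : ℤ) ^ (i + 1) * 2 ^ (n - i) * n.choose i) := by
      rw [map_sum, Finset.mul_sum, ← Finset.sum_sub_distrib]
      exact Finset.sum_congr rfl fun i _ => by ring
    rw [e1, hA]
    have e2 : ∑ i ∈ Finset.range (n+1), (X : Polynomial ℤ)^(n-i) *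
          C ((-1 : ℤ) ^ (i + 1) * 2 ^ (n - i) * n.choose i)
        = -((-1) + 2*X : Polynomial ℤ)^n := by
      rw [add_pow, ← Finset.sum_neg_distrib]
      refine Finset.sum_congr rfl fun i _ => ?_
      simp only [map_mul, map_pow, map_neg, C_1, C_eq_natCast, map_ofNat]
      push_cast
      ring
    rw [e2]
    simp only [map_mul, map_pow, map_neg, C_1, C_eq_natCast, map_ofNat]
    push_cast
    ring
  rw [h1, h2]





variable {n : ℕ}

def orbitC (σ : Perm (Fin (n+1))) : Finset (Fin (n+1)) :=
  Finset.univ.filter fun x => σ.SameCycle x (Fin.last n)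

lemma mem_orbitC {σ : Perm (Fin (n+1))} {x : Fin (n+1)} :
    x ∈ orbitC σ ↔ σ.SameCycle x (Fin.last n) := by
  unfold orbitC
  rw [Finset.mem_filter]
  simp

lemma last_mem_orbitC (σ : Perm (Fin (n+1))) : Fin.last n ∈ orbitC σ :=
  mem_orbitC.mpr (SameCycle.refl _ _)

lemma orbitC_apply_mem {σ : Perm (Fin (n+1))} {x : Fin (n+1)} (hx : x ∈ orbitC σ) :
    σ x ∈ orbitC σ := by
  rw [mem_orbitC] at hx ⊢
  exact (sameCycle_apply_left).mpr hx

def rho (C : Finset (Fin (n+1))) {m : ℕ} (hC : C.card = m+1) : Perm (Fin (n+1)) :=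
  (finRotate (m+1)).extendDomain (C.orderIsoOfFin hC).toEquiv

lemma rho_apply_mem {C : Finset (Fin (n+1))} {m : ℕ} (hC : C.card = m+1)
    {x : Fin (n+1)} (hx : x ∈ C) :
    rho C hC x = ((C.orderIsoOfFin hC) (finRotate (m+1) ((C.orderIsoOfFin hC).symm ⟨x, hx⟩)) : Fin (n+1)) := by
  unfold rho
  rw [Equiv.Perm.extendDomain_apply_subtype _ _ hx]
  rfl

lemma rho_apply_not_mem {C : Finset (Fin (n+1))} {m : ℕ} (hC : C.card = m+1)
    {x : Fin (n+1)} (hx : x ∉ C) : rho C hC x = x := by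
  unfold rho
  exact Equiv.Perm.extendDomain_apply_not_subtype _ _ hx

lemma rho_mem {C : Finset (Fin (n+1))} {m : ℕ} (hC : C.card = m+1)
    {x : Fin (n+1)} (hx : x ∈ C) : rho C hC x ∈ C := by
  rw [rho_apply_mem hC hx]
  exact ((C.orderIsoOfFin hC) _).2

-- the image of `Fin.last m` is the top element `Fin.last n`
lemma orderIso_last {C : Finset (Fin (n+1))} {m : ℕ} (hC : C.card = m+1)
    (hL : Fin.last n ∈ C) :
    ((C.orderIsoOfFin hC) (Fin.last m) : Fin (n+1)) = Fin.last n := by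
  refine le_antisymm (Fin.le_last _) ?_
  have h1 : (⟨Fin.last n, hL⟩ : {x // x ∈ C}) = (C.orderIsoOfFin hC) ((C.orderIsoOfFin hC).symm ⟨Fin.last n, hL⟩) := by
    rw [OrderIso.apply_symm_apply]
  have h2 : (C.orderIsoOfFin hC).symm ⟨Fin.last n, hL⟩ ≤ Fin.last m := Fin.le_last _
  have h3 := (C.orderIsoOfFin hC).le_iff_le.mpr h2
  calc Fin.last n = ((C.orderIsoOfFin hC) ((C.orderIsoOfFin hC).symm ⟨Fin.last n, hL⟩) : Fin (n+1)) := by rw [← h1]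
    _ ≤ _ := h3

lemma orderIso_eq_last {C : Finset (Fin (n+1))} {m : ℕ} (hC : C.card = m+1)
    (hL : Fin.last n ∈ C) {j : Fin (m+1)} (hj : ((C.orderIsoOfFin hC) j : Fin (n+1)) = Fin.last n) :
    j = Fin.last m := by
  by_contra hne
  have hlt : j < Fin.last m := lt_of_le_of_ne (Fin.le_last j) hne
  have := (C.orderIsoOfFin hC).lt_iff_lt.mpr hlt
  have hcoe : ((C.orderIsoOfFin hC) j : Fin (n+1)) < ((C.orderIsoOfFin hC) (Fin.last m) : Fin (n+1)) := this
  rw [hj, orderIso_last hC hL] at hcoe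
  exact absurd hcoe (lt_irrefl _)

lemma rho_lt {C : Finset (Fin (n+1))} {m : ℕ} (hC : C.card = m+1)
    (hL : Fin.last n ∈ C) {x : Fin (n+1)} (hx : x ∈ C) (hxL : x ≠ Fin.last n) :
    x < rho C hC x := by
  set e := C.orderIsoOfFin hC
  set j := e.symm ⟨x, hx⟩ with hj
  have hxj : x = (e j : Fin (n+1)) := by rw [hj, OrderIso.apply_symm_apply]
  have hjne : j ≠ Fin.last m := by
    intro h
    apply hxL
    rw [hxj, h, orderIso_last hC hL]
  have hjlt : j < finRotate (m+1) j := by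
    rw [finRotate_succ_apply]
    rw [Fin.lt_def, Fin.val_add_one]
    rw [if_neg hjne]
    omega
  have := e.lt_iff_lt.mpr hjlt
  rw [rho_apply_mem hC hx, ← hj]
  calc x = (e j : Fin (n+1)) := hxj
    _ < (e (finRotate (m+1) j) : Fin (n+1)) := this

lemma rho_le_of_mem_gt {C : Finset (Fin (n+1))} {m : ℕ} (hC : C.card = m+1)
    (hL : Fin.last n ∈ C) {x y : Fin (n+1)} (hx : x ∈ C) (hxL : x ≠ Fin.last n)
    (hy : y ∈ C) (hxy : x < y) : rho C hC x ≤ y := by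
  set e := C.orderIsoOfFin hC
  set j := e.symm ⟨x, hx⟩ with hj
  set k := e.symm ⟨y, hy⟩ with hk
  have hxj : x = (e j : Fin (n+1)) := by rw [hj, OrderIso.apply_symm_apply]
  have hyk : y = (e k : Fin (n+1)) := by rw [hk, OrderIso.apply_symm_apply]
  have hjne : j ≠ Fin.last m := by
    intro h
    apply hxL
    rw [hxj, h, orderIso_last hC hL]
  have hjk : j < k := by
    rw [hj, hk]
    exact (OrderIso.lt_iff_lt e.symm).mpr (Subtype.mk_lt_mk.mpr hxy)
  have hrot : finRotate (m+1) j ≤ k := by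
    rw [finRotate_succ_apply, Fin.le_def, Fin.val_add_one, if_neg hjne]
    rw [Fin.lt_def] at hjk
    omega
  rw [rho_apply_mem hC hx, ← hj, hyk]
  exact e.le_iff_le.mpr hrot

lemma rho_last_le {C : Finset (Fin (n+1))} {m : ℕ} (hC : C.card = m+1)
    {y : Fin (n+1)} (hL : Fin.last n ∈ C) (hy : y ∈ C) : rho C hC (Fin.last n) ≤ y := by
  set e := C.orderIsoOfFin hC
  have h0 : ∀ z : {x // x ∈ C}, e 0 ≤ z := by
    intro z
    have := e.le_iff_le.mpr (Fin.zero_le (e.symm z))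
    rwa [OrderIso.apply_symm_apply] at this
  have hlast : e.symm ⟨Fin.last n, hL⟩ = Fin.last m := by
    apply orderIso_eq_last hC hL
    rw [OrderIso.apply_symm_apply]
  rw [rho_apply_mem hC hL, hlast, finRotate_last]
  exact h0 ⟨y, hy⟩

lemma sigma_eq_rho {σ : Perm (Fin (n+1))} {C : Finset (Fin (n+1))} {m : ℕ}
    (hC : C.card = m+1) (hL : Fin.last n ∈ C)
    (hinv : ∀ x ∈ C, σ x ∈ C)
    (hinc : ∀ x ∈ C, x ≠ Fin.last n → x < σ x) :
    ∀ x ∈ C, σ x = rho C hC x := by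
  have hsum : ∀ (f : Perm (Fin (n+1))), (∀ x ∈ C, f x ∈ C) →
      ∑ x ∈ C, ((f x : Fin (n+1)) : ℕ) = ∑ x ∈ C, ((x : Fin (n+1)) : ℕ) := by
    intro f hf
    have himg : C.image f = C := by
      apply Finset.eq_of_subset_of_card_le
      · intro y hy
        rw [Finset.mem_image] at hy
        obtain ⟨x, hx, rfl⟩ := hy
        exact hf x hx
      · rw [Finset.card_image_of_injective _ f.injective]
    conv_rhs => rw [← himg]
    rw [Finset.sum_image (fun a _ b _ h => f.injective h)]
  have hle : ∀ x ∈ C, ((rho C hC x : Fin (n+1)) : ℕ) ≤ ((σ x : Fin (n+1)) : ℕ) := by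
    intro x hx
    by_cases hxL : x = Fin.last n
    · subst hxL
      exact Fin.le_def.mp (rho_last_le hC hL (hinv _ hx))
    · exact Fin.le_def.mp (rho_le_of_mem_gt hC hL hx hxL (hinv x hx) (hinc x hx hxL))
  have hsums : ∑ x ∈ C, ((rho C hC x : Fin (n+1)) : ℕ) = ∑ x ∈ C, ((σ x : Fin (n+1)) : ℕ) := by
    rw [hsum σ hinv, hsum (rho C hC) (fun x hx => rho_mem hC hx)]
  intro x hx
  have := (Finset.sum_eq_sum_iff_of_le hle).mp hsums x hx
  exact Fin.ext this.symm

def bwd (C : Finset (Fin (n+1))) {m : ℕ} (hC : C.card = m+1)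
    (τ : Perm {x : Fin (n+1) // x ∈ Cᶜ}) : Perm (Fin (n+1)) :=
  rho C hC * Equiv.Perm.ofSubtype τ

lemma bwd_apply_mem {C : Finset (Fin (n+1))} {m : ℕ} (hC : C.card = m+1)
    {τ : Perm {x : Fin (n+1) // x ∈ Cᶜ}} {x : Fin (n+1)} (hx : x ∈ C) :
    bwd C hC τ x = rho C hC x := by
  unfold bwd
  rw [Equiv.Perm.mul_apply, Equiv.Perm.ofSubtype_apply_of_not_mem τ (by simp [hx])]

lemma bwd_apply_not_mem {C : Finset (Fin (n+1))} {m : ℕ} (hC : C.card = m+1)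
    {τ : Perm {x : Fin (n+1) // x ∈ Cᶜ}} {x : Fin (n+1)} (hx : x ∈ Cᶜ) :
    bwd C hC τ x = ((τ ⟨x, hx⟩ : {x : Fin (n+1) // x ∈ Cᶜ}) : Fin (n+1)) := by
  unfold bwd
  rw [Equiv.Perm.mul_apply, Equiv.Perm.ofSubtype_apply_of_mem τ hx]
  apply rho_apply_not_mem hC
  have := (τ ⟨x, hx⟩).2
  simp only [Finset.mem_compl] at this
  exact this

lemma bwd_mem {C : Finset (Fin (n+1))} {m : ℕ} (hC : C.card = m+1)
    {τ : Perm {x : Fin (n+1) // x ∈ Cᶜ}} {x : Fin (n+1)} (hx : x ∈ C) :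
    bwd C hC τ x ∈ C := by
  rw [bwd_apply_mem hC hx]
  exact rho_mem hC hx

lemma pow_mem_of_mem {f : Perm (Fin (n+1))} {S : Finset (Fin (n+1))}
    (hf : ∀ x ∈ S, f x ∈ S) : ∀ (k : ℕ), ∀ x ∈ S, (f^k) x ∈ S := by
  intro k
  induction k with
  | zero => intro x hx; simpa using hx
  | succ k ih =>
    intro x hx
    rw [pow_succ', Equiv.Perm.mul_apply]
    exact hf _ (ih x hx)

lemma bwd_pow_eq_rho_pow {C : Finset (Fin (n+1))} {m : ℕ} (hC : C.card = m+1)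
    {τ : Perm {x : Fin (n+1) // x ∈ Cᶜ}} :
    ∀ (k : ℕ), ∀ x ∈ C, ((bwd C hC τ)^k) x = ((rho C hC)^k) x := by
  intro k
  induction k with
  | zero => intro x _; simp
  | succ k ih =>
    intro x hx
    rw [pow_succ', pow_succ', Equiv.Perm.mul_apply, Equiv.Perm.mul_apply, ih x hx]
    exact bwd_apply_mem hC (pow_mem_of_mem (fun z hz => rho_mem hC hz) k x hx)

lemma sameCycle_rho_last {C : Finset (Fin (n+1))} {m : ℕ} (hC : C.card = m+1)
    (hL : Fin.last n ∈ C) {x : Fin (n+1)} (hx : x ∈ C) :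
    (rho C hC).SameCycle x (Fin.last n) := by
  set e := C.orderIsoOfFin hC
  have hx' : x = ((e (e.symm ⟨x, hx⟩) : {z // z ∈ C}) : Fin (n+1)) := by
    rw [OrderIso.apply_symm_apply]
  have hL' : Fin.last n = ((e (Fin.last m) : {z // z ∈ C}) : Fin (n+1)) :=
    (orderIso_last hC hL).symm
  have hsc : (finRotate (m+1)).SameCycle (e.symm ⟨x, hx⟩) (Fin.last m) := by
    rcases Nat.eq_zero_or_pos m with hm | hm
    · subst hm
      have h0 : e.symm ⟨x, hx⟩ = Fin.last 0 := by
        apply Fin.ext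
        have := (e.symm ⟨x, hx⟩).isLt
        simp only [Fin.val_last]
        omega
      rw [h0]
    · have hcyc : IsCycle (finRotate (m+1)) := isCycle_finRotate_of_le (by omega)
      have hmove : ∀ z : Fin (m+1), finRotate (m+1) z ≠ z := by
        intro z h
        rw [finRotate_succ_apply] at h
        have hval := congrArg Fin.val h
        rw [Fin.val_add_one] at hval
        split_ifs at hval with hz
        · rw [hz] at hval
          simp only [Fin.val_last] at hval
          omega
        · omega
      exact hcyc.sameCycle (hmove _) (hmove _)
  have := hsc.extendDomain (f := e.toEquiv)
  rw [hx', hL']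
  exact this

lemma mem_of_sameCycle_bwd {C : Finset (Fin (n+1))} {m : ℕ} (hC : C.card = m+1)
    (hL : Fin.last n ∈ C) {τ : Perm {x : Fin (n+1) // x ∈ Cᶜ}} {x : Fin (n+1)}
    (h : (bwd C hC τ).SameCycle x (Fin.last n)) : x ∈ C := by
  obtain ⟨k, -, hk⟩ := h.symm.exists_pow_eq'
  rw [← hk]
  exact pow_mem_of_mem (fun z hz => bwd_mem hC hz) k _ hL

lemma orbit_bwd {C : Finset (Fin (n+1))} {m : ℕ} (hC : C.card = m+1)
    (hL : Fin.last n ∈ C) (τ : Perm {x : Fin (n+1) // x ∈ Cᶜ}) :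
    orbitC (bwd C hC τ) = C := by
  ext x
  rw [mem_orbitC]
  constructor
  · exact mem_of_sameCycle_bwd hC hL
  · intro hx
    have hsc := sameCycle_rho_last hC hL hx
    obtain ⟨k, -, hk⟩ := hsc.exists_pow_eq'
    exact ⟨(k : ℤ), by rw [zpow_natCast, bwd_pow_eq_rho_pow hC k x hx]; exact hk⟩

lemma mem_Qhat_iff {σ : Perm (Fin (n+1))} :
    σ ∈ Qhat n ↔ ∀ x, σ.SameCycle x (Fin.last n) → x ≠ Fin.last n → x < σ x := by
  unfold Qhat
  rw [Finset.mem_filter]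
  simp

lemma bwd_mem_Qhat {C : Finset (Fin (n+1))} {m : ℕ} (hC : C.card = m+1)
    (hL : Fin.last n ∈ C) (τ : Perm {x : Fin (n+1) // x ∈ Cᶜ}) :
    bwd C hC τ ∈ Qhat n := by
  rw [mem_Qhat_iff]
  intro x hsc hxL
  have hx : x ∈ C := mem_of_sameCycle_bwd hC hL hsc
  rw [bwd_apply_mem hC hx]
  exact rho_lt hC hL hx hxL


lemma card_filter_split (C : Finset (Fin (n+1))) (p : Fin (n+1) → Prop) [DecidablePred p] :
    (Finset.univ.filter p).card = (C.filter p).card + (Cᶜ.filter p).card := by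
  rw [← Finset.card_union_of_disjoint
    (Finset.disjoint_filter_filter disjoint_compl_right), ← Finset.filter_union,
    Finset.union_compl]

lemma exc_bwd {C : Finset (Fin (n+1))} {m : ℕ} (hC : C.card = m+1)
    (hL : Fin.last n ∈ C) (τ : Perm {x : Fin (n+1) // x ∈ Cᶜ}) :
    exc (bwd C hC τ) = m + excG τ := by
  unfold exc
  rw [card_filter_split C]
  congr 1
  · have hfe : C.filter (fun i => i < bwd C hC τ i) = C.erase (Fin.last n) := by
      ext z
      rw [Finset.mem_filter, Finset.mem_erase]
      constructor
      · rintro ⟨hz, hlt⟩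
        refine ⟨?_, hz⟩
        intro hzL
        subst hzL
        exact absurd hlt (not_lt.mpr (Fin.le_last _))
      · rintro ⟨hne, hz⟩
        refine ⟨hz, ?_⟩
        rw [bwd_apply_mem hC hz]
        exact rho_lt hC hL hz hne
    rw [hfe, Finset.card_erase_of_mem hL, hC]
    omega
  · unfold excG
    refine Finset.card_bij' (fun x hx => (⟨x, (Finset.mem_filter.mp hx).1⟩ : {z : Fin (n+1) // z ∈ Cᶜ}))
      (fun y _ => (y : Fin (n+1))) ?_ ?_ ?_ ?_
    · intro a ha
      rw [Finset.mem_filter] at ha ⊢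
      obtain ⟨ha1, ha2⟩ := ha
      refine ⟨Finset.mem_univ _, ?_⟩
      rw [bwd_apply_not_mem hC ha1] at ha2
      exact ha2
    · intro y hy
      rw [Finset.mem_filter] at hy ⊢
      refine ⟨y.2, ?_⟩
      rw [bwd_apply_not_mem hC y.2]
      simp only [Subtype.coe_eta]
      exact Subtype.coe_lt_coe.mpr hy.2
    · intro a _; rfl
    · intro y _; exact Subtype.ext rfl
  
lemma fixp_bwd {C : Finset (Fin (n+1))} {m : ℕ} (hC : C.card = m+1)
    (hL : Fin.last n ∈ C) (τ : Perm {x : Fin (n+1) // x ∈ Cᶜ}) :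
    fixp (bwd C hC τ) = (if m = 0 then 1 else 0) + fixG τ := by
  unfold fixp
  rw [card_filter_split C]
  congr 1
  · rcases Nat.eq_zero_or_pos m with hm | hm
    · subst hm
      rw [if_pos rfl]
      have hall : ∀ z ∈ C, bwd C hC τ z = z := by
        intro z hz
        rw [bwd_apply_mem hC hz]
        exact Finset.card_le_one.mp (le_of_eq hC) _ (rho_mem hC hz) _ hz
      rw [Finset.filter_true_of_mem hall, hC]
    · rw [if_neg (by omega)]
      rw [Finset.card_eq_zero]
      rw [Finset.filter_eq_empty_iff]
      intro z hz
      rw [bwd_apply_mem hC hz]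
      by_cases hzL : z = Fin.last n
      · subst hzL
        -- rho L = e 0 < e last = L
        intro heq
        set e := C.orderIsoOfFin hC
        have hlast : e.symm ⟨Fin.last n, hL⟩ = Fin.last m := by
          apply orderIso_eq_last hC hL
          rw [OrderIso.apply_symm_apply]
        rw [rho_apply_mem hC hL, hlast, finRotate_last] at heq
        have h0l : (0 : Fin (m+1)) < Fin.last m := by
          rw [Fin.lt_def]
          simp only [Fin.val_zero, Fin.val_last]
          omega
        have := e.lt_iff_lt.mpr h0l
        have hcoe : ((e 0 : {z // z ∈ C}) : Fin (n+1)) < ((e (Fin.last m) : {z // z ∈ C}) : Fin (n+1)) := this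
        rw [orderIso_last hC hL] at hcoe
        rw [heq] at hcoe
        exact absurd hcoe (lt_irrefl _)
      · exact ne_of_gt (rho_lt hC hL hz hzL)
  · unfold fixG
    refine Finset.card_bij' (fun x hx => (⟨x, (Finset.mem_filter.mp hx).1⟩ : {z : Fin (n+1) // z ∈ Cᶜ}))
      (fun y _ => (y : Fin (n+1))) ?_ ?_ ?_ ?_
    · intro a ha
      rw [Finset.mem_filter] at ha ⊢
      obtain ⟨ha1, ha2⟩ := ha
      refine ⟨Finset.mem_univ _, ?_⟩
      rw [bwd_apply_not_mem hC ha1] at ha2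
      exact Subtype.ext ha2
    · intro y hy
      rw [Finset.mem_filter] at hy ⊢
      refine ⟨y.2, ?_⟩
      rw [bwd_apply_not_mem hC y.2]
      simp only [Subtype.coe_eta]
      rw [hy.2]
    · intro a _; rfl
    · intro y _; exact Subtype.ext rfl

lemma cycleType_bwd {C : Finset (Fin (n+1))} {m : ℕ} (hC : C.card = m+1)
    (τ : Perm {x : Fin (n+1) // x ∈ Cᶜ}) :
    Multiset.card (bwd C hC τ).cycleType
      = (if m = 0 then 0 else 1) + Multiset.card τ.cycleType := by
  have hdisj : (rho C hC).Disjoint (Equiv.Perm.ofSubtype τ) := by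
    intro x
    by_cases hx : x ∈ C
    · right
      exact Equiv.Perm.ofSubtype_apply_of_not_mem τ (by simp [hx])
    · left
      exact rho_apply_not_mem hC hx
  unfold bwd
  rw [hdisj.cycleType_mul, Multiset.card_add, Equiv.Perm.cycleType_ofSubtype]
  have hrho : Multiset.card (rho C hC).cycleType = (if m = 0 then 0 else 1) := by
    unfold rho
    rw [Equiv.Perm.cycleType_extendDomain]
    rcases Nat.eq_zero_or_pos m with hm | hm
    · subst hm
      rw [if_pos rfl, finRotate_one]
      have h1 : (Equiv.refl (Fin (0+1))) = (1 : Perm (Fin (0+1))) := rfl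
      rw [h1, Equiv.Perm.cycleType_one]
      rfl
    · rw [if_neg (by omega)]
      have hcyc : IsCycle (finRotate (m+1)) := isCycle_finRotate_of_le (by omega)
      rw [hcyc.cycleType]
      rfl
  rw [hrho]


lemma compl_iff_of_orbit {σ : Perm (Fin (n+1))} {C : Finset (Fin (n+1))}
    (hor : orbitC σ = C) : ∀ x, x ∈ Cᶜ ↔ σ x ∈ Cᶜ := by
  intro x
  rw [Finset.mem_compl, Finset.mem_compl, not_iff_not, ← hor, mem_orbitC, mem_orbitC]
  exact (sameCycle_apply_left).symm

lemma fiber_sum (C : Finset (Fin (n+1))) (m : ℕ) (hC : C.card = m+1) (hL : Fin.last n ∈ C) :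
    ∑ σ ∈ (Qhat n).filter (fun σ => orbitC σ = C),
        (X : Polynomial ℤ)^(exc σ) * (-1)^(cyc σ)
      = -(X : Polynomial ℤ)^m * Aval (n - m) := by
  have hbij : ∑ τ : Perm {x : Fin (n+1) // x ∈ Cᶜ},
        (X : Polynomial ℤ)^(m + excG τ) * (-1)^(1 + cycG τ)
      = ∑ σ ∈ (Qhat n).filter (fun σ => orbitC σ = C),
        (X : Polynomial ℤ)^(exc σ) * (-1)^(cyc σ) := by
    refine Finset.sum_bij' (fun τ _ => bwd C hC τ)
      (fun σ hσ => σ.subtypePerm (fun x => (compl_iff_of_orbit (Finset.mem_filter.mp hσ).2 x).symm))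
      ?_ ?_ ?_ ?_ ?_
    · intro τ _
      rw [Finset.mem_filter]
      exact ⟨bwd_mem_Qhat hC hL τ, orbit_bwd hC hL τ⟩
    · intro σ _
      exact Finset.mem_univ _
    · intro τ _
      apply Equiv.ext
      rintro ⟨x, hx⟩
      apply Subtype.ext
      simp only [Equiv.Perm.subtypePerm_apply]
      rw [bwd_apply_not_mem hC hx]
    · intro σ hσ
      rw [Finset.mem_filter] at hσ
      obtain ⟨hQ, hor⟩ := hσ
      apply Equiv.ext
      intro x
      by_cases hx : x ∈ C
      · rw [bwd_apply_mem hC hx]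
        refine (sigma_eq_rho hC hL ?_ ?_ x hx).symm
        · intro z hz
          rw [← hor, mem_orbitC] at hz ⊢
          exact sameCycle_apply_left.mpr hz
        · intro z hz hzL
          rw [← hor, mem_orbitC] at hz
          exact (mem_Qhat_iff.mp hQ) z hz hzL
      · rw [bwd_apply_not_mem hC (Finset.mem_compl.mpr hx)]
        rfl
    · intro τ _
      have hexc : exc (bwd C hC τ) = m + excG τ := exc_bwd hC hL τ
      have hcyc : cyc (bwd C hC τ) = 1 + cycG τ := by
        unfold cyc
        rw [cycleType_bwd hC τ, fixp_bwd hC hL τ]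
        rcases Nat.eq_zero_or_pos m with hm | hm
        · subst hm; simp [cycG]; omega
        · rw [if_neg (by omega), if_neg (by omega)]
          unfold cycG
          omega
      rw [hexc, hcyc]
  rw [← hbij]
  have hcard : Fintype.card {x : Fin (n+1) // x ∈ Cᶜ} = n - m := by
    rw [Fintype.card_coe, Finset.card_compl, hC, Fintype.card_fin]
    omega
  calc ∑ τ : Perm {x : Fin (n+1) // x ∈ Cᶜ},
        (X : Polynomial ℤ)^(m + excG τ) * (-1)^(1 + cycG τ)
      = ∑ τ : Perm {x : Fin (n+1) // x ∈ Cᶜ},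
          (-(X : Polynomial ℤ)^m) * ((X : Polynomial ℤ)^(excG τ) * (-1)^(cycG τ)) := by
        refine Finset.sum_congr rfl fun τ _ => ?_
        rw [pow_add, pow_add]
        ring
    _ = -(X : Polynomial ℤ)^m * Aval (n - m) := by
        rw [← Finset.mul_sum, sum_excG_cycG (n - m) hcard]

theorem main_sum (n : ℕ) :
    ∑ σ ∈ Qhat n, (X : Polynomial ℤ) ^ exc σ * (-1) ^ cyc σ
      = ∑ j ∈ Finset.range (n+1), (n.choose j) • (-(X : Polynomial ℤ)^j * Aval (n - j)) := by
  rw [← Finset.sum_fiberwise_of_maps_to (g := orbitC)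
    (t := (Finset.univ.filter fun C => Fin.last n ∈ C))
    (fun σ _ => Finset.mem_filter.mpr ⟨Finset.mem_univ _, last_mem_orbitC σ⟩)]
  have hstep : ∀ C ∈ Finset.univ.filter (fun C : Finset (Fin (n+1)) => Fin.last n ∈ C),
      ∑ σ ∈ (Qhat n).filter (fun σ => orbitC σ = C),
          (X : Polynomial ℤ)^(exc σ) * (-1)^(cyc σ)
        = -(X : Polynomial ℤ)^(C.card - 1) * Aval (n - (C.card - 1)) := by
    intro C hC'
    rw [Finset.mem_filter] at hC'
    obtain ⟨m, hm⟩ : ∃ m, C.card = m + 1 :=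
      ⟨C.card - 1, by have := Finset.card_ne_zero_of_mem hC'.2; omega⟩
    rw [fiber_sum C m hm hC'.2, hm]
    simp
  rw [Finset.sum_congr rfl hstep]
  have hreidx : ∑ C ∈ Finset.univ.filter (fun C : Finset (Fin (n+1)) => Fin.last n ∈ C),
      -(X : Polynomial ℤ)^(C.card - 1) * Aval (n - (C.card - 1))
      = ∑ S ∈ (Finset.univ.erase (Fin.last n)).powerset,
          -(X : Polynomial ℤ)^(S.card) * Aval (n - S.card) := by
    refine Finset.sum_bij' (fun C _ => C.erase (Fin.last n))
      (fun S _ => insert (Fin.last n) S) ?_ ?_ ?_ ?_ ?_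
    · intro C hC'
      rw [Finset.mem_filter] at hC'
      rw [Finset.mem_powerset]
      exact Finset.erase_subset_erase _ (Finset.subset_univ C)
    · intro S hS
      rw [Finset.mem_filter]
      exact ⟨Finset.mem_univ _, Finset.mem_insert_self _ _⟩
    · intro C hC'
      rw [Finset.mem_filter] at hC'
      exact Finset.insert_erase hC'.2
    · intro S hS
      rw [Finset.mem_powerset] at hS
      apply Finset.erase_insert
      intro hLS
      exact absurd (hS hLS) (Finset.notMem_erase _ _)
    · intro C hC'
      rw [Finset.mem_filter] at hC'
      rw [Finset.card_erase_of_mem hC'.2]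
  rw [hreidx, Finset.sum_powerset]
  have hcard : (Finset.univ.erase (Fin.last n)).card = n := by
    rw [Finset.card_erase_of_mem (Finset.mem_univ _), Finset.card_univ, Fintype.card_fin]
    omega
  rw [hcard]
  refine Finset.sum_congr rfl fun j hj => ?_
  rw [Finset.sum_powersetCard j (Finset.univ.erase (Fin.last n))
    (fun k => -(X : Polynomial ℤ)^k * Aval (n - k)), hcard]



end

end SECS

/-- Note that `(-1)^(i-1) = (-1)^(i+1)`, which avoids truncated subtraction at `i = 0`. -/
theorem sum_exc_cyc_sign (n : ℕ) :
    ∑ σ ∈ Qhat n, (X : Polynomial ℤ) ^ exc σ * (-1) ^ cyc σ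
      = ∑ k ∈ Finset.range (n + 1), (X : Polynomial ℤ) ^ (n - k) *
          C (∑ i ∈ Finset.Icc k n, (-1 : ℤ) ^ (i + 1) * 2 ^ (n - i) * n.choose i) := by
  exact (SECS.main_sum n).trans (SECS.partD n)
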